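/- The function j is monotone nondecreasing on ℝ; equivalently, (j(t₁) − j(t₂))·(t₁ − t₂) ≥ 0 for all real t₁, t₂. -/

import Mathlib

/-- The superposition function `j` from the first-order optimality system of the
regularized `L^q`-quasinorm optimal control problem, with parameters `q ∈ (0,1)`
and `γ > 0`.  Here `δ_γ = q^q γ^(1-q)` and powers are real powers. -/
noncomputable def jfun (q γ t : ℝ) : ℝ :=
  if 1 / γ < |t| then
    (q ^ q * γ ^ (1 - q) - q * (|t| + (q - 1) / γ) ^ (q - 1)) * Real.sign t
  else 0

lemma jfun_delta_eq {q γ : ℝ} (hq0 : 0 < q) (hγ : 0 < γ) :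
    q ^ q * γ ^ (1 - q) = q * (q / γ) ^ (q - 1) := by
  have h1 : q ^ q = q * q ^ (q - 1) := by
    have h := Real.rpow_add hq0 1 (q - 1)
    rw [Real.rpow_one] at h
    rw [show (1 : ℝ) + (q - 1) = q by ring] at h
    exact h
  have h2 : γ ^ (1 - q) = (γ ^ (q - 1))⁻¹ := by
    rw [show (1 : ℝ) - q = -(q - 1) by ring, Real.rpow_neg hγ.le]
  rw [h1, h2, Real.div_rpow hq0.le hγ.le]
  field_simp

lemma jfun_neg (q γ t : ℝ) : jfun q γ (-t) = - jfun q γ t := by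
  unfold jfun
  rw [abs_neg, Real.sign_neg]
  split_ifs with h
  · ring
  · ring

lemma jfun_zero (q γ : ℝ) (hγ : 0 < γ) : jfun q γ 0 = 0 := by
  unfold jfun
  rw [if_neg]
  rw [abs_zero]
  exact not_lt.2 (by positivity)

lemma jfun_nonneg_of_pos {q γ : ℝ} (hq0 : 0 < q) (hq1 : q < 1) (hγ : 0 < γ)
    {t : ℝ} (ht : 1 / γ < t) :
    0 ≤ q ^ q * γ ^ (1 - q) - q * (t + (q - 1) / γ) ^ (q - 1) := by
  have hqγ : 0 < q / γ := div_pos hq0 hγ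
  have hsum : 1 / γ + (q - 1) / γ = q / γ := by
    rw [← add_div, show (1 : ℝ) + (q - 1) = q by ring]
  have hle : q / γ ≤ t + (q - 1) / γ := by linarith
  have hpow : (t + (q - 1) / γ) ^ (q - 1) ≤ (q / γ) ^ (q - 1) :=
    Real.rpow_le_rpow_of_nonpos hqγ hle (by linarith)
  have := mul_le_mul_of_nonneg_left hpow hq0.le
  rw [jfun_delta_eq hq0 hγ]
  linarith

lemma jfun_mono_nonneg {q γ : ℝ} (hq0 : 0 < q) (hq1 : q < 1) (hγ : 0 < γ)
    {s t : ℝ} (hs : 0 ≤ s) (hst : s ≤ t) : jfun q γ s ≤ jfun q γ t := by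
  have ht : 0 ≤ t := hs.trans hst
  unfold jfun
  rw [abs_of_nonneg hs, abs_of_nonneg ht]
  by_cases h1 : 1 / γ < s
  · have h2 : 1 / γ < t := h1.trans_le hst
    rw [if_pos h1, if_pos h2]
    have hspos : 0 < s := (by positivity : (0 : ℝ) < 1 / γ).trans h1
    have htpos : 0 < t := hspos.trans_le hst
    rw [Real.sign_of_pos hspos, Real.sign_of_pos htpos, mul_one, mul_one]
    have hqγ : 0 < q / γ := div_pos hq0 hγ
    have hsum : 1 / γ + (q - 1) / γ = q / γ := by
      rw [← add_div, show (1 : ℝ) + (q - 1) = q by ring]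
    have hle : q / γ ≤ s + (q - 1) / γ := by linarith
    have hpow : (t + (q - 1) / γ) ^ (q - 1) ≤ (s + (q - 1) / γ) ^ (q - 1) :=
      Real.rpow_le_rpow_of_nonpos (hqγ.trans_le hle) (by linarith) (by linarith)
    nlinarith [mul_le_mul_of_nonneg_left hpow hq0.le]
  · rw [if_neg h1]
    by_cases h2 : 1 / γ < t
    · rw [if_pos h2]
      have htpos : 0 < t := (by positivity : (0 : ℝ) < 1 / γ).trans h2
      rw [Real.sign_of_pos htpos, mul_one]
      exact jfun_nonneg_of_pos hq0 hq1 hγ h2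
    · rw [if_neg h2]

/-- The function `j` is monotone nondecreasing on `ℝ`; equivalently,
`(j(t₁) − j(t₂)) (t₁ − t₂) ≥ 0` for all real `t₁, t₂`. -/
theorem jfun_monotone (q γ : ℝ) (hq0 : 0 < q) (hq1 : q < 1) (hγ : 0 < γ) :
    Monotone (jfun q γ) ∧
      ∀ t₁ t₂ : ℝ, 0 ≤ (jfun q γ t₁ - jfun q γ t₂) * (t₁ - t₂) := by
  have hmono : Monotone (jfun q γ) := by
    intro s t hst
    rcases le_total 0 s with hs | hs
    · exact jfun_mono_nonneg hq0 hq1 hγ hs hst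
    · rcases le_total t 0 with ht | ht
      · have h := jfun_mono_nonneg hq0 hq1 hγ (by linarith : (0 : ℝ) ≤ -t)
          (by linarith : -t ≤ -s)
        rw [jfun_neg, jfun_neg] at h
        linarith
      · have h1 := jfun_mono_nonneg hq0 hq1 hγ le_rfl (by linarith : (0 : ℝ) ≤ -s)
        rw [jfun_neg, jfun_zero q γ hγ] at h1
        have h2 := jfun_mono_nonneg hq0 hq1 hγ le_rfl ht
        rw [jfun_zero q γ hγ] at h2
        linarith
  refine ⟨hmono, fun t₁ t₂ => ?_⟩
  rcases le_total t₂ t₁ with h | h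
  · exact mul_nonneg (sub_nonneg.2 (hmono h)) (sub_nonneg.2 h)
  · have := mul_nonneg (neg_nonneg.2 (sub_nonpos.2 (hmono h)))
      (neg_nonneg.2 (sub_nonpos.2 h))
    nlinarith [this]
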